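/- Let f₁, f₂ ∈ ℂ[x₀,…,xₙ] be linearly independent homogeneous polynomials of degree d. The ℂ-vector space of pairs (g₁, g₂) of homogeneous linear forms (or zero) satisfying g₁·f₁ + g₂·f₂ = 0 has dimension at most 1. -/
import Mathlib

open MvPolynomial

namespace SyzygyAux

variable {σ : Type*} {R : Type*}

/-- The "homogenization in an extra variable" algebra map. -/
noncomputable def Phi [CommSemiring R] : MvPolynomial σ R →ₐ[R] Polynomial (MvPolynomial σ R) :=
  aeval (fun i => Polynomial.C (X i) * Polynomial.X)

lemma Phi_monomial [CommSemiring R] (s : σ →₀ ℕ) (r : R) :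
    Phi (monomial s r) =
      Polynomial.C (monomial s r) * Polynomial.X ^ (s.sum fun _ e => e) := by
  classical
  rw [Phi, aeval_monomial]
  have h1 : (s.prod fun n e => (Polynomial.C (X n : MvPolynomial σ R) * Polynomial.X) ^ e)
      = Polynomial.C (s.prod fun n e => (X n : MvPolynomial σ R) ^ e) *
          Polynomial.X ^ (s.sum fun _ e => e) := by
    rw [Finsupp.prod, Finsupp.prod, Finsupp.sum]
    simp only [mul_pow]
    rw [Finset.prod_mul_distrib, map_prod]
    simp only [map_pow]
    rw [Finset.prod_pow_eq_pow_sum]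
  rw [h1, monomial_eq]
  have halg : (algebraMap R (Polynomial (MvPolynomial σ R))) r = Polynomial.C (C r) := by
    simp [Polynomial.algebraMap_apply, MvPolynomial.algebraMap_eq]
  rw [halg, map_mul]
  ring

lemma Phi_coeff [CommSemiring R] (p : MvPolynomial σ R) (k : ℕ) :
    (Phi p).coeff k = homogeneousComponent k p := by
  classical
  conv_lhs => rw [p.as_sum, map_sum]
  rw [Polynomial.finset_sum_coeff, homogeneousComponent_apply, Finset.sum_filter]
  refine Finset.sum_congr rfl fun v hv => ?_
  rw [Phi_monomial, Polynomial.coeff_C_mul, Polynomial.coeff_X_pow]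
  have hdeg : v.degree = v.sum fun _ e => e := by
    rw [Finsupp.degree]; rfl
  by_cases h : v.degree = k
  · rw [if_pos h, if_pos (by omega), mul_one]
  · rw [if_neg h, if_neg (by omega), mul_zero]

lemma top_component_ne_zero [CommSemiring R] {p : MvPolynomial σ R} (hp : p ≠ 0) :
    homogeneousComponent p.totalDegree p ≠ 0 := by
  classical
  obtain ⟨m, hm, hdeg⟩ :=
    p.support.exists_mem_eq_sup (support_nonempty.mpr hp) (fun s => s.sum fun _ e => e)
  intro h0
  have hc := coeff_homogeneousComponent (n := p.totalDegree) (φ := p) m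
  have hmdeg : m.degree = p.totalDegree := by
    rw [Finsupp.degree]
    rw [totalDegree, hdeg]
    rfl
  rw [h0, coeff_zero, if_pos hmdeg] at hc
  exact (mem_support_iff.mp hm) hc.symm

lemma Phi_ne_zero [CommSemiring R] {p : MvPolynomial σ R} (hp : p ≠ 0) : Phi p ≠ 0 := by
  intro h
  apply top_component_ne_zero hp
  rw [← Phi_coeff, h, Polynomial.coeff_zero]

lemma Phi_natDegree [CommSemiring R] {p : MvPolynomial σ R} (hp : p ≠ 0) :
    (Phi p).natDegree = p.totalDegree := by
  apply le_antisymm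
  · rw [Polynomial.natDegree_le_iff_coeff_eq_zero]
    intro k hk
    rw [Phi_coeff]
    exact homogeneousComponent_eq_zero _ _ hk
  · apply Polynomial.le_natDegree_of_ne_zero
    rw [Phi_coeff]
    exact top_component_ne_zero hp

lemma totalDegree_mul_eq [CommRing R] [IsDomain R] {p q : MvPolynomial σ R}
    (hp : p ≠ 0) (hq : q ≠ 0) :
    (p * q).totalDegree = p.totalDegree + q.totalDegree := by
  have h := Polynomial.natDegree_mul (Phi_ne_zero hp) (Phi_ne_zero hq)
  rw [← map_mul] at h
  rwa [Phi_natDegree (mul_ne_zero hp hq), Phi_natDegree hp, Phi_natDegree hq] at h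

lemma eq_C_of_totalDegree_eq_zero [CommSemiring R] {p : MvPolynomial σ R}
    (h : p.totalDegree = 0) : p = C (coeff 0 p) := by
  classical
  ext m
  rw [coeff_C]
  by_cases h0 : 0 = m
  · rw [if_pos h0, ← h0]
  · rw [if_neg h0]
    by_contra hc
    have hmem : m ∈ p.support := mem_support_iff.mpr hc
    have hle := le_totalDegree hmem
    rw [h, Nat.le_zero] at hle
    have : m.degree = 0 := by rw [Finsupp.degree]; exact hle
    exact h0 ((Finsupp.degree_eq_zero_iff m).mp this).symm

variable {n : ℕ}

local notation "M" => MvPolynomial (Fin (n + 1)) ℂ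

lemma prime_of_isHomogeneous_one {a : M} (ha : a.IsHomogeneous 1) (h0 : a ≠ 0) :
    Prime a := by
  rw [← UniqueFactorizationMonoid.irreducible_iff_prime]
  constructor
  · intro hu
    obtain ⟨b, hb⟩ := isUnit_iff_exists_inv.mp hu
    have hb0 : b ≠ 0 := by rintro rfl; simp at hb
    have hd := totalDegree_mul_eq h0 hb0
    rw [hb, totalDegree_one, ha.totalDegree h0] at hd
    omega
  · intro u v huv
    have huv0 : u * v ≠ 0 := huv ▸ h0
    have hu0 : u ≠ 0 := left_ne_zero_of_mul huv0
    have hv0 : v ≠ 0 := right_ne_zero_of_mul huv0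
    have hd := totalDegree_mul_eq hu0 hv0
    rw [← huv, ha.totalDegree h0] at hd
    rcases Nat.add_eq_one_iff.mp hd.symm with ⟨hu, -⟩ | ⟨-, hv⟩
    · left
      have := eq_C_of_totalDegree_eq_zero hu
      have hc : coeff 0 u ≠ 0 := fun h => hu0 (by rw [this, h, map_zero])
      rw [this]
      exact (isUnit_iff_ne_zero.mpr hc).map (C : ℂ →+* M)
    · right
      have := eq_C_of_totalDegree_eq_zero hv
      have hc : coeff 0 v ≠ 0 := fun h => hv0 (by rw [this, h, map_zero])
      rw [this]
      exact (isUnit_iff_ne_zero.mpr hc).map (C : ℂ →+* M)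

/-- If a nonzero linear form divides another polynomial homogeneous of degree 1,
the quotient is a constant. -/
lemma exists_C_of_dvd {a c : M} (ha : a.IsHomogeneous 1) (hc : c.IsHomogeneous 1)
    (ha0 : a ≠ 0) (hc0 : c ≠ 0) (h : a ∣ c) : ∃ μ : ℂ, c = C μ * a := by
  obtain ⟨w, rfl⟩ := h
  have hw0 : w ≠ 0 := right_ne_zero_of_mul hc0
  have hd := totalDegree_mul_eq ha0 hw0
  rw [hc.totalDegree hc0, ha.totalDegree ha0] at hd
  have hw : w.totalDegree = 0 := by omega
  refine ⟨coeff 0 w, ?_⟩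
  rw [← eq_C_of_totalDegree_eq_zero hw]
  ring

end SyzygyAux

open SyzygyAux

/-- For `f₁, f₂` linearly independent homogeneous of degree `d`,
the space of pairs `(g₁, g₂)` of linear forms (or zero) with `g₁f₁ + g₂f₂ = 0`,
i.e. the kernel of `(g₁,g₂) ↦ g₁f₁ + g₂f₂` intersected with the space of pairs of
degree-1 homogeneous polynomials, has dimension at most 1. -/
theorem syzygy_space_rank_le_one (n d : ℕ)
    (f₁ f₂ : MvPolynomial (Fin (n + 1)) ℂ)
    (hf₁ : f₁.IsHomogeneous d) (hf₂ : f₂.IsHomogeneous d)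
    (hind : LinearIndependent ℂ ![f₁, f₂])
    (S : Submodule ℂ (MvPolynomial (Fin (n + 1)) ℂ × MvPolynomial (Fin (n + 1)) ℂ))
    (hS : S = (homogeneousSubmodule (Fin (n + 1)) ℂ 1).prod
            (homogeneousSubmodule (Fin (n + 1)) ℂ 1) ⊓
          LinearMap.ker ((LinearMap.mulRight ℂ f₁).coprod (LinearMap.mulRight ℂ f₂))) :
    Module.rank ℂ S ≤ 1 := by
  classical
  have hf₁0 : f₁ ≠ 0 := by
    have := hind.ne_zero 0; simpa using this
  have hf₂0 : f₂ ≠ 0 := by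
    have := hind.ne_zero 1; simpa using this
  rw [LinearIndependent.pair_iff] at hind
  subst hS
  letI : Module.Free ℂ ↥((homogeneousSubmodule (Fin (n + 1)) ℂ 1).prod
            (homogeneousSubmodule (Fin (n + 1)) ℂ 1) ⊓
          LinearMap.ker ((LinearMap.mulRight ℂ f₁).coprod (LinearMap.mulRight ℂ f₂))) :=
    Module.Free.of_divisionRing _ _
  rw [rank_le_one_iff]
  by_cases hex : ∃ v : ↥((homogeneousSubmodule (Fin (n + 1)) ℂ 1).prod
            (homogeneousSubmodule (Fin (n + 1)) ℂ 1) ⊓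
          LinearMap.ker ((LinearMap.mulRight ℂ f₁).coprod (LinearMap.mulRight ℂ f₂))), v ≠ 0
  swap
  · push_neg at hex
    exact ⟨0, fun v => ⟨0, by rw [hex v, smul_zero]⟩⟩
  obtain ⟨⟨⟨a, b⟩, hmem⟩, hv₀⟩ := hex
  rw [Submodule.mem_inf, Submodule.mem_prod, LinearMap.mem_ker] at hmem
  obtain ⟨⟨ha1, hb1⟩, hker⟩ := hmem
  simp only [LinearMap.coprod_apply, LinearMap.mulRight_apply] at hker
  replace ha1 : a.IsHomogeneous 1 := ha1
  replace hb1 : b.IsHomogeneous 1 := hb1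
  have hab : ¬(a = 0 ∧ b = 0) := by
    rintro ⟨rfl, rfl⟩
    exact hv₀ (by ext <;> rfl)
  have ha0 : a ≠ 0 := by
    rintro rfl
    apply hab
    refine ⟨rfl, ?_⟩
    have : b * f₂ = 0 := by simpa using hker
    rcases mul_eq_zero.mp this with h | h
    · exact h
    · exact absurd h hf₂0
  have hprime : Prime a := prime_of_isHomogeneous_one ha1 ha0
  refine ⟨⟨(a, b), by
      rw [Submodule.mem_inf, Submodule.mem_prod, LinearMap.mem_ker]
      refine ⟨⟨ha1, hb1⟩, ?_⟩
      simpa only [LinearMap.coprod_apply, LinearMap.mulRight_apply] using hker⟩,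
    fun v => ?_⟩
  obtain ⟨⟨c, dd⟩, hmem'⟩ := v
  rw [Submodule.mem_inf, Submodule.mem_prod, LinearMap.mem_ker] at hmem'
  obtain ⟨⟨hc1, hd1⟩, hker'⟩ := hmem'
  simp only [LinearMap.coprod_apply, LinearMap.mulRight_apply] at hker'
  replace hc1 : c.IsHomogeneous 1 := hc1
  replace hd1 : dd.IsHomogeneous 1 := hd1
  suffices h : ∃ r : ℂ, r • a = c ∧ r • b = dd by
    obtain ⟨r, h1, h2⟩ := h
    refine ⟨r, Subtype.ext ?_⟩
    show r • (a, b) = (c, dd)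
    rw [Prod.smul_mk, h1, h2]
  have key : a * dd = b * c := by
    have h1 : (a * dd - b * c) * f₁ = 0 := by linear_combination dd * hker - b * hker'
    rcases mul_eq_zero.mp h1 with h | h
    · exact sub_eq_zero.mp h
    · exact absurd h hf₁0
  by_cases hc : c = 0
  · have hd : dd = 0 := by
      have : a * dd = 0 := by rw [key, hc, mul_zero]
      rcases mul_eq_zero.mp this with h | h
      · exact absurd h ha0
      · exact h
    exact ⟨0, by rw [hc, zero_smul], by rw [hd, zero_smul]⟩
  · have hdvd : a ∣ b * c := ⟨dd, key.symm⟩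
    rcases hprime.2.2 b c hdvd with hb | hdc
    · -- a ∣ b : contradiction with linear independence
      exfalso
      obtain ⟨w, rfl⟩ := hb
      have hfw : f₁ + w * f₂ = 0 := by
        have h0 : a * (f₁ + w * f₂) = 0 := by linear_combination hker
        rcases mul_eq_zero.mp h0 with h | h
        · exact absurd h ha0
        · exact h
      have hw0 : w ≠ 0 := by
        rintro rfl
        apply hf₁0
        simpa using hfw
      have hd := totalDegree_mul_eq ha0 hw0
      rw [hb1.totalDegree (mul_ne_zero ha0 hw0), ha1.totalDegree ha0] at hd
      have hwdeg : w.totalDegree = 0 := by omega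
      have hwC := eq_C_of_totalDegree_eq_zero hwdeg
      have hrel : (1 : ℂ) • f₁ + (coeff 0 w) • f₂ = 0 := by
        rw [one_smul, smul_eq_C_mul, ← hwC]
        exact hfw
      exact one_ne_zero ((hind 1 (coeff 0 w) hrel).1)
    · obtain ⟨μ, hμ⟩ := exists_C_of_dvd ha1 hc1 ha0 hc hdc
      refine ⟨μ, ?_, ?_⟩
      · rw [smul_eq_C_mul, ← hμ]
      · have : a * dd = a * (C μ * b) := by rw [key, hμ]; ring
        have hdd := mul_left_cancel₀ ha0 this
        rw [smul_eq_C_mul, ← hdd]
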